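/- For a < μ₀ < b and the agnostic alternative {Q : E_Q[X] ≠ μ₀}, the GROW value is 0: sup over α ∈ [1/(μ₀-b), 1/(μ₀-a)] of inf over μ ≠ μ₀ of the c-envelope f_α^c(μ) equals 0, attained uniquely by α = 0 (i.e., the constant e-variable 1). -/

import Mathlib

open MeasureTheory Set

/-- Infimum of `E_Q[log (1 + α (X - μ₀))]` over probability measures `Q` on `[a,b]`
with mean `μ` (the c-envelope of `f_α` at `μ`), with the e-power set to `-∞` when the
log is not integrable or the e-variable vanishes with positive probability. -/
noncomputable def fAlphaC (a b μ₀ α μ : ℝ) : EReal :=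
  sInf {y : EReal | ∃ Q : Measure ℝ, IsProbabilityMeasure Q ∧
    Q (Icc a b)ᶜ = 0 ∧ (∫ t, t ∂Q) = μ ∧
    (((Q {t | 1 + α * (t - μ₀) ≤ 0} = 0 ∧
        Integrable (fun t => Real.log (1 + α * (t - μ₀))) Q) ∧
       y = ((∫ t, Real.log (1 + α * (t - μ₀)) ∂Q : ℝ) : EReal)) ∨
     (¬(Q {t | 1 + α * (t - μ₀) ≤ 0} = 0 ∧
        Integrable (fun t => Real.log (1 + α * (t - μ₀))) Q) ∧ y = ⊥))}

lemma integrable_dirac' (f : ℝ → ℝ) (μ : ℝ) : Integrable f (Measure.dirac μ) := by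
  refine (integrable_const (f μ)).congr ?_
  rw [Filter.EventuallyEq, MeasureTheory.ae_dirac_eq]
  exact Filter.eventually_pure.2 rfl

lemma fAlphaC_le_bot (a b μ₀ α μ : ℝ) (hμ : μ ∈ Icc a b)
    (hp : 1 + α * (μ - μ₀) ≤ 0) : fAlphaC a b μ₀ α μ ≤ ⊥ := by
  refine sInf_le ?_
  refine ⟨Measure.dirac μ, Measure.dirac.isProbabilityMeasure, ?_, by simp, ?_⟩
  · rw [Measure.dirac_apply]
    simp [Set.indicator_of_notMem, hμ]
  · refine Or.inr ⟨?_, rfl⟩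
    intro ⟨h0, _⟩
    rw [Measure.dirac_apply] at h0
    simp [Set.indicator_of_mem, hp] at h0

lemma fAlphaC_le_log (a b μ₀ α μ : ℝ) (hμ : μ ∈ Icc a b)
    (hpos : 0 < 1 + α * (μ - μ₀)) :
    fAlphaC a b μ₀ α μ ≤ ((Real.log (1 + α * (μ - μ₀)) : ℝ) : EReal) := by
  refine sInf_le ?_
  refine ⟨Measure.dirac μ, Measure.dirac.isProbabilityMeasure, ?_, by simp, ?_⟩
  · rw [Measure.dirac_apply]
    simp [Set.indicator_of_notMem, hμ]
  · refine Or.inl ⟨⟨?_, _root_.integrable_dirac' _ _⟩, ?_⟩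
    · rw [Measure.dirac_apply]
      have : μ ∉ {t : ℝ | 1 + α * (t - μ₀) ≤ 0} := by
        simp only [Set.mem_setOf_eq, not_le]; exact hpos
      simp [Set.indicator_of_notMem this]
    · rw [integral_dirac]

lemma fAlphaC_zero (a b μ₀ μ : ℝ) (hμ : μ ∈ Icc a b) :
    fAlphaC a b μ₀ 0 μ = 0 := by
  refine le_antisymm ?_ ?_
  · have := fAlphaC_le_log a b μ₀ 0 μ hμ (by norm_num)
    simpa using this
  · refine le_sInf ?_
    rintro y ⟨Q, hQ, hsupp, hmean, hy⟩
    rcases hy with ⟨_, rfl⟩ | ⟨hneg, rfl⟩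
    · simp
    · exfalso
      apply hneg
      have hs : {t : ℝ | 1 + 0 * (t - μ₀) ≤ 0} = ∅ := by ext t; simp
      refine ⟨by rw [hs]; exact measure_empty, ?_⟩
      simp

theorem stmt12 (a b μ₀ : ℝ) (h1 : a < μ₀) (h2 : μ₀ < b) :
    (⨆ α ∈ Icc (1 / (μ₀ - b)) (1 / (μ₀ - a)),
      ⨅ μ ∈ Icc a b \ {μ₀}, fAlphaC a b μ₀ α μ) = 0 ∧
    (⨅ μ ∈ Icc a b \ {μ₀}, fAlphaC a b μ₀ 0 μ) = 0 ∧
    (∀ α ∈ Icc (1 / (μ₀ - b)) (1 / (μ₀ - a)), α ≠ 0 →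
      (⨅ μ ∈ Icc a b \ {μ₀}, fAlphaC a b μ₀ α μ) < 0) := by
  have hab : a < b := h1.trans h2
  have ha : a ∈ Icc a b \ {μ₀} := ⟨⟨le_refl a, hab.le⟩, by simp [h1.ne]⟩
  have hb : b ∈ Icc a b \ {μ₀} := ⟨⟨hab.le, le_refl b⟩, by simp [h2.ne']⟩
  have hinf0 : (⨅ μ ∈ Icc a b \ {μ₀}, fAlphaC a b μ₀ 0 μ) = 0 := by
    refine le_antisymm ?_ ?_
    · refine le_trans (biInf_le _ ha) ?_
      rw [fAlphaC_zero a b μ₀ a ⟨le_refl a, hab.le⟩]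
    · refine le_iInf₂ fun μ hμ => ?_
      rw [fAlphaC_zero a b μ₀ μ hμ.1]
  have hneg : ∀ α ∈ Icc (1 / (μ₀ - b)) (1 / (μ₀ - a)), α ≠ 0 →
      (⨅ μ ∈ Icc a b \ {μ₀}, fAlphaC a b μ₀ α μ) < 0 := by
    intro α hα hα0
    rcases lt_or_gt_of_ne hα0 with hlt | hgt
    · -- α < 0 : use μ = b
      refine lt_of_le_of_lt (biInf_le _ hb) ?_
      by_cases hp : 0 < 1 + α * (b - μ₀)
      · refine lt_of_le_of_lt (fAlphaC_le_log a b μ₀ α b ⟨hab.le, le_refl b⟩ hp) ?_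
        have h1' : 1 + α * (b - μ₀) < 1 := by nlinarith
        have := Real.log_neg hp h1'
        exact_mod_cast EReal.coe_lt_coe_iff.mpr this
      · push_neg at hp
        exact lt_of_le_of_lt (fAlphaC_le_bot a b μ₀ α b ⟨hab.le, le_refl b⟩ hp)
          (by norm_num)
    · -- α > 0 : use μ = a
      refine lt_of_le_of_lt (biInf_le _ ha) ?_
      by_cases hp : 0 < 1 + α * (a - μ₀)
      · refine lt_of_le_of_lt (fAlphaC_le_log a b μ₀ α a ⟨le_refl a, hab.le⟩ hp) ?_
        have h1' : 1 + α * (a - μ₀) < 1 := by nlinarith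
        have := Real.log_neg hp h1'
        exact_mod_cast EReal.coe_lt_coe_iff.mpr this
      · push_neg at hp
        exact lt_of_le_of_lt (fAlphaC_le_bot a b μ₀ α a ⟨le_refl a, hab.le⟩ hp)
          (by norm_num)
  refine ⟨?_, hinf0, hneg⟩
  refine le_antisymm ?_ ?_
  · refine iSup₂_le fun α hα => ?_
    by_cases hα0 : α = 0
    · subst hα0; exact hinf0.le
    · exact (hneg α hα hα0).le
  · have h0mem : (0 : ℝ) ∈ Icc (1 / (μ₀ - b)) (1 / (μ₀ - a)) := by
      constructor
      · exact le_of_lt (one_div_neg.mpr (by linarith))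
      · exact le_of_lt (one_div_pos.mpr (by linarith))
    calc (0 : EReal) = ⨅ μ ∈ Icc a b \ {μ₀}, fAlphaC a b μ₀ 0 μ := hinf0.symm
      _ ≤ _ := le_iSup₂ (f := fun α _ => ⨅ μ ∈ Icc a b \ {μ₀}, fAlphaC a b μ₀ α μ) 0 h0mem
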